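/- There exists a countable set A ⊆ ℝ such that A is a conical limit set (of some subset of the upper half-plane {(t, v) : t > 0, v ∈ ℝ}) but A is not a Gδ subset of ℝ. (For example, the set of endpoints of the complementary intervals of the middle-thirds Cantor set has this property.) -/

import Mathlib

open Filter Topology

/-- The open upper half-space over a normed space `V`: pairs `(t, v)` with `t > 0`. -/
def upperHalf (V : Type*) [NormedAddCommGroup V] : Set (ℝ × V) := {p | 0 < p.1}

/-- The conical limit set of `E ⊆ ℝ × V`: points `x` for which there are `C > 0` and a
sequence `(t_n, v_n)` in `E` with `t_n → 0`, `v_n → x` and `‖v_n - x‖ ≤ C * t_n`. -/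
def conicalLimitSet {V : Type*} [NormedAddCommGroup V] (E : Set (ℝ × V)) : Set V :=
  {x | ∃ C > 0, ∃ w : ℕ → ℝ × V, (∀ n, w n ∈ E) ∧
    Tendsto (fun n => (w n).1) atTop (𝓝 (0 : ℝ)) ∧
    Tendsto (fun n => (w n).2) atTop (𝓝 x) ∧
    ∀ n, ‖(w n).2 - x‖ ≤ C * (w n).1}

/-- `X ⊆ V` is a conical limit set if it is the conical limit set of some subset of the
upper half-space. -/
def IsConicalLimitSet {V : Type*} [NormedAddCommGroup V] (X : Set V) : Prop :=
  ∃ E ⊆ upperHalf V, conicalLimitSet E = X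

namespace CLSProof

noncomputable section

/-- The basic geometric scale. -/
def q (i : ℕ) : ℝ := (4 : ℝ)⁻¹ ^ i

lemma q_pos (i : ℕ) : 0 < q i := by
  unfold q; positivity

lemma q_anti {i j : ℕ} (h : i ≤ j) : q j ≤ q i :=
  pow_le_pow_of_le_one (by norm_num) (by norm_num) h

/-- The sum of the scales over a finite set. -/
def aF (F : Finset ℕ) : ℝ := ∑ i ∈ F, q i

lemma tail_le {j : ℕ} {S : Finset ℕ} (hS : ∀ i ∈ S, j < i) :
    (∑ i ∈ S, q i) ≤ q j / 3 := by
  classical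
  set N := max (S.sup id + 1) (j + 1) with hN
  have hsub : S ⊆ Finset.Ico (j + 1) N := by
    intro i hi
    rw [Finset.mem_Ico]
    refine ⟨hS i hi, ?_⟩
    have h1 : i ≤ S.sup id := Finset.le_sup (f := id) hi
    have h2 : S.sup id + 1 ≤ N := le_max_left _ _
    omega
  have h1 : (∑ i ∈ S, q i) ≤ ∑ i ∈ Finset.Ico (j + 1) N, q i :=
    Finset.sum_le_sum_of_subset_of_nonneg hsub (fun i _ _ => (q_pos i).le)
  have h2 : (∑ i ∈ Finset.Ico (j + 1) N, q i)
      = ((4 : ℝ)⁻¹ ^ N - (4 : ℝ)⁻¹ ^ (j + 1)) / ((4 : ℝ)⁻¹ - 1) := by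
    simpa [q] using geom_sum_Ico (x := (4 : ℝ)⁻¹) (by norm_num) (le_max_right _ _)
  have h3 : (0 : ℝ) ≤ (4 : ℝ)⁻¹ ^ N := by positivity
  have h4 : (4 : ℝ)⁻¹ ^ (j + 1) = q j * 4⁻¹ := by rw [q, pow_succ]
  refine le_trans h1 ?_
  rw [h2, div_le_iff_of_neg (show (4 : ℝ)⁻¹ - 1 < 0 by norm_num)]
  have := q_pos j
  nlinarith [h3, h4]

lemma core {F F' : Finset ℕ} {j : ℕ} (hj' : j ∈ F') (hj : j ∉ F)
    (hagree : ∀ i, i < j → (i ∈ F ↔ i ∈ F')) :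
    aF F + 2 / 3 * q j ≤ aF F' := by
  classical
  have hsplit : ∀ S : Finset ℕ,
      aF S = (∑ i ∈ S.filter (fun i => i < j), q i)
        + ∑ i ∈ S.filter (fun i => ¬ i < j), q i := by
    intro S
    rw [aF, ← Finset.sum_filter_add_sum_filter_not S (fun i => i < j)]
  have hlow : F.filter (fun i => i < j) = F'.filter (fun i => i < j) := by
    ext i
    simp only [Finset.mem_filter]
    constructor
    · rintro ⟨h1, h2⟩; exact ⟨(hagree i h2).mp h1, h2⟩
    · rintro ⟨h1, h2⟩; exact ⟨(hagree i h2).mpr h1, h2⟩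
  have hFhigh : (∑ i ∈ F.filter (fun i => ¬ i < j), q i) ≤ q j / 3 := by
    apply tail_le
    intro i hi
    rw [Finset.mem_filter] at hi
    have : i ≠ j := fun h => hj (h ▸ hi.1)
    omega
  have hF'high : q j ≤ ∑ i ∈ F'.filter (fun i => ¬ i < j), q i := by
    apply Finset.single_le_sum (f := q) (fun i _ => (q_pos i).le)
    simp [hj']
  rw [hsplit F, hsplit F', hlow]
  linarith

lemma exists_min_diff {F F' : Finset ℕ} (h : F ≠ F') :
    ∃ j, (∀ i, i < j → (i ∈ F ↔ i ∈ F')) ∧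
      ((j ∈ F ∧ j ∉ F') ∨ (j ∈ F' ∧ j ∉ F)) := by
  classical
  set D := (F \ F') ∪ (F' \ F) with hD
  have hDne : D.Nonempty := by
    rcases D.eq_empty_or_nonempty with he | hne
    · exfalso
      apply h
      rw [Finset.union_eq_empty] at he
      exact le_antisymm (Finset.sdiff_eq_empty_iff_subset.mp he.1)
        (Finset.sdiff_eq_empty_iff_subset.mp he.2)
    · exact hne
  set j := D.min' hDne with hj
  have hjD : j ∈ D := D.min'_mem hDne
  refine ⟨j, ?_, ?_⟩
  · intro i hij
    by_contra hne
    have hiD : i ∈ D := by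
      simp only [hD, Finset.mem_union, Finset.mem_sdiff]
      tauto
    have := D.min'_le i hiD
    omega
  · simpa only [hD, Finset.mem_union, Finset.mem_sdiff] using hjD

/-- Index type: nonempty finite sets of naturals. -/
abbrev Idx := {F : Finset ℕ // F.Nonempty}

/-- An injective encoding of indices into `ℕ`. -/
def encF (G : Idx) : ℕ := Encodable.encode G.1

lemma encF_inj : Function.Injective encF := fun a b h =>
  Subtype.ext (Encodable.encode_injective h)

/-- The slope used for the approach to the point indexed by `G`. -/
def Kc (G : Idx) : ℝ := encF G + 1

lemma Kc_pos (G : Idx) : 0 < Kc G := by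
  unfold Kc; positivity

/-- The largest element of the index set. -/
def mX (G : Idx) : ℕ := G.1.max' G.2

/-- The point of `A` indexed by `G`. -/
def aI (G : Idx) : ℝ := aF G.1

/-- The height cutoff for the approach segment at `G`. -/
def δc (G : Idx) : ℝ := q (mX G) / (3 * Kc G)

lemma δc_pos (G : Idx) : 0 < δc G :=
  div_pos (q_pos _) (by have := Kc_pos G; linarith)

/-- The subset of the upper half-plane whose conical limit set is `A`. -/
def Ec : Set (ℝ × ℝ) :=
  ⋃ G : Idx, {p : ℝ × ℝ | p.1 ∈ Set.Ioc 0 (δc G) ∧ p.2 = aI G - Kc G * p.1}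

/-- The countable non-`G_δ` conical limit set. -/
def Ac : Set ℝ := Set.range aI

lemma sepI {G G' : Idx} (h : aI G < aI G') :
    aI G + 2 / 3 * q (mX G') ≤ aI G' := by
  have hne : G.1 ≠ G'.1 := by
    intro he
    rw [aI, aI, he] at h
    exact lt_irrefl _ h
  obtain ⟨j, hag, hcase⟩ := exists_min_diff hne
  rcases hcase with ⟨hjF, hjF'⟩ | ⟨hjF', hjF⟩
  · have hco := core hjF hjF' (fun i hi => (hag i hi).symm)
    have := q_pos j
    rw [aI, aI] at h
    linarith
  · have hco := core hjF' hjF hag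
    have hq : q (mX G') ≤ q j := q_anti (Finset.le_max' _ j hjF')
    rw [aI, aI]
    linarith

lemma aI_inj : Function.Injective aI := by
  intro G G' h
  by_contra hne
  have hv : G.1 ≠ G'.1 := fun he => hne (Subtype.ext he)
  obtain ⟨j, hag, hcase⟩ := exists_min_diff hv
  have hq := q_pos j
  rcases hcase with ⟨hjF, hjF'⟩ | ⟨hjF', hjF⟩
  · have hco := core hjF hjF' (fun i hi => (hag i hi).symm)
    rw [aI, aI] at h
    linarith
  · have hco := core hjF' hjF hag
    rw [aI, aI] at h
    linarith

lemma Ec_subset : Ec ⊆ upperHalf ℝ := by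
  intro p hp
  obtain ⟨G, hG⟩ := Set.mem_iUnion.mp hp
  exact hG.1.1

lemma Ac_countable : Ac.Countable := Set.countable_range _

lemma Ac_nonempty : Ac.Nonempty :=
  ⟨aI ⟨{0}, Finset.singleton_nonempty 0⟩, Set.mem_range_self _⟩

lemma lim_eq : conicalLimitSet Ec = Ac := by
  apply subset_antisymm
  · rintro x ⟨C, hC, w, hwE, ht0, hvx, hcone⟩
    choose G hG using fun n => Set.mem_iUnion.mp (hwE n)
    have htpos : ∀ n, 0 < (w n).1 := fun n => (hG n).1.1
    have htle : ∀ n, (w n).1 ≤ δc (G n) := fun n => (hG n).1.2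
    have hveq : ∀ n, (w n).2 = aI (G n) - Kc (G n) * (w n).1 := fun n => (hG n).2
    by_cases hfreq : ∃ G₀ : Idx, ∀ N, ∃ n, N ≤ n ∧ G n = G₀
    · obtain ⟨G₀, hG₀⟩ := hfreq
      refine ⟨G₀, ?_⟩
      have hK0 : 0 < Kc G₀ := Kc_pos G₀
      have key : ∀ ε : ℝ, 0 < ε → |aI G₀ - x| < ε := by
        intro ε hε
        obtain ⟨N₁, hN₁⟩ := Metric.tendsto_atTop.mp ht0 (ε / (2 * Kc G₀)) (by positivity)
        obtain ⟨N₂, hN₂⟩ := Metric.tendsto_atTop.mp hvx (ε / 2) (by positivity)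
        obtain ⟨n, hn, hGn⟩ := hG₀ (max N₁ N₂)
        have h1 := hN₁ n (le_trans (le_max_left _ _) hn)
        have h2 := hN₂ n (le_trans (le_max_right _ _) hn)
        rw [Real.dist_eq, sub_zero] at h1
        rw [Real.dist_eq] at h2
        have hv := hveq n
        rw [hGn] at hv
        have heq : aI G₀ - x = ((w n).2 - x) + Kc G₀ * (w n).1 := by
          rw [hv]; ring
        have habs : |aI G₀ - x| ≤ |(w n).2 - x| + Kc G₀ * |(w n).1| := by
          rw [heq]
          refine le_trans (abs_add_le _ _) ?_
          rw [abs_mul, abs_of_pos hK0]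
        have hlt : Kc G₀ * |(w n).1| < Kc G₀ * (ε / (2 * Kc G₀)) :=
          mul_lt_mul_of_pos_left h1 hK0
        have hK2 : Kc G₀ * (ε / (2 * Kc G₀)) = ε / 2 := by
          field_simp
        linarith
      by_contra hne
      exact absurd (key _ (abs_pos.mpr (sub_ne_zero.mpr hne))) (lt_irrefl _)
    · exfalso
      push_neg at hfreq
      choose Nb hNb using hfreq
      have hTfin : {G₀ : Idx | Kc G₀ ≤ 2 * C}.Finite := by
        have h1 : {m : ℕ | (m : ℝ) + 1 ≤ 2 * C}.Finite := by
          apply Set.Finite.subset (Set.finite_Iic (Nat.floor (2 * C)))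
          intro m hm
          simp only [Set.mem_setOf_eq] at hm
          exact Set.mem_Iic.mpr (Nat.le_floor (by linarith))
        have heq : {G₀ : Idx | Kc G₀ ≤ 2 * C} = encF ⁻¹' {m : ℕ | (m : ℝ) + 1 ≤ 2 * C} := rfl
        rw [heq]
        exact h1.preimage (Set.injOn_of_injective encF_inj)
      have hSfin : {n : ℕ | Kc (G n) ≤ 2 * C}.Finite := by
        have hsub : {n : ℕ | Kc (G n) ≤ 2 * C}
            ⊆ ⋃ G₀ ∈ {G₀ : Idx | Kc G₀ ≤ 2 * C}, Set.Iio (Nb G₀) := by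
          intro n hn
          refine Set.mem_biUnion hn ?_
          simp only [Set.mem_Iio]
          by_contra hc
          push_neg at hc
          exact hNb (G n) n hc rfl
        exact Set.Finite.subset (Set.Finite.biUnion hTfin (fun _ _ => Set.finite_Iio _)) hsub
      obtain ⟨b, hb⟩ := hSfin.bddAbove
      have hbig : ∀ n, b + 1 ≤ n → 2 * C < Kc (G n) := by
        intro n hn
        by_contra hc
        push_neg at hc
        have := hb (show n ∈ {n : ℕ | Kc (G n) ≤ 2 * C} from hc)
        omega
      have hgap : ∀ n, b + 1 ≤ n →
          aI (G n) - 2 / 3 * q (mX (G n)) < x ∧ x < aI (G n) := by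
        intro n hn
        have hK := hbig n hn
        have ht := htpos n
        have htd := htle n
        have hcn := hcone n
        rw [Real.norm_eq_abs] at hcn
        obtain ⟨hc1, hc2⟩ := abs_le.mp hcn
        have hv := hveq n
        have hKne : Kc (G n) ≠ 0 := ne_of_gt (Kc_pos _)
        have hKδ : Kc (G n) * δc (G n) = q (mX (G n)) / 3 := by
          rw [δc]
          field_simp
        have hKt : Kc (G n) * (w n).1 ≤ q (mX (G n)) / 3 := by
          calc Kc (G n) * (w n).1 ≤ Kc (G n) * δc (G n) :=
                mul_le_mul_of_nonneg_left htd (Kc_pos _).le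
            _ = _ := hKδ
        have hCK : C < Kc (G n) := by linarith
        have hCt : C * (w n).1 < Kc (G n) * (w n).1 :=
          mul_lt_mul_of_pos_right hCK ht
        constructor
        · have hlow : aI (G n) - Kc (G n) * (w n).1 - C * (w n).1 ≤ x := by
            rw [hv] at hc2
            linarith
          linarith
        · have hup : x ≤ aI (G n) - Kc (G n) * (w n).1 + C * (w n).1 := by
            rw [hv] at hc1
            linarith
          linarith
      set n₂ := max (b + 1) (Nb (G (b + 1))) with hn₂
      have hA := hgap (b + 1) le_rfl
      have hB := hgap n₂ (le_max_left _ _)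
      have hne2 : G n₂ ≠ G (b + 1) := hNb (G (b + 1)) n₂ (le_max_right _ _)
      rcases lt_trichotomy (aI (G (b + 1))) (aI (G n₂)) with hlt | heq | hgt
      · have hs := sepI hlt
        linarith [hA.2, hB.1]
      · exact hne2 ((aI_inj heq).symm ▸ rfl)
      · have hs := sepI hgt
        linarith [hB.2, hA.1]
  · rintro x ⟨G, rfl⟩
    have hδ := δc_pos G
    have hK := Kc_pos G
    have httend : Tendsto (fun n : ℕ => δc G / (n + 1)) atTop (𝓝 0) := by
      have h := tendsto_one_div_add_atTop_nhds_zero_nat.const_mul (δc G)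
      simpa [div_eq_mul_inv] using h
    refine ⟨Kc G, hK, fun n => (δc G / (n + 1), aI G - Kc G * (δc G / (n + 1))),
      ?_, ?_, ?_, ?_⟩
    · intro n
      apply Set.mem_iUnion.mpr
      refine ⟨G, ⟨⟨by positivity, ?_⟩, rfl⟩⟩
      apply div_le_self hδ.le
      have : (0 : ℝ) ≤ (n : ℝ) := Nat.cast_nonneg n
      linarith
    · exact httend
    · have h := httend.const_mul (Kc G)
      have h2 := tendsto_const_nhds (x := aI G) (f := atTop (α := ℕ)) |>.sub h
      simpa using h2
    · intro n
      have ht : 0 < δc G / ((n : ℝ) + 1) := by positivity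
      have heq : aI G - Kc G * (δc G / (n + 1)) - aI G = -(Kc G * (δc G / (n + 1))) := by
        ring
      rw [Real.norm_eq_abs, heq, abs_neg, abs_of_pos (by positivity)]

lemma near (x : ℝ) (hx : x ∈ closure Ac) {ε : ℝ} (hε : 0 < ε) :
    ∃ y ∈ Ac, y ≠ x ∧ |y - x| < ε := by
  obtain ⟨z, hzA, hzd⟩ := Metric.mem_closure_iff.mp hx (ε / 2) (by positivity)
  by_cases hzx : z = x
  · subst hzx
    obtain ⟨G, rfl⟩ := hzA
    obtain ⟨n₀, hn₀⟩ := exists_pow_lt_of_lt_one hε (show (4 : ℝ)⁻¹ < 1 by norm_num)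
    set n := max n₀ (mX G + 1) with hn
    have hqn : q n < ε := lt_of_le_of_lt (q_anti (le_max_left _ _)) hn₀
    have hnG : n ∉ G.1 := by
      intro hmem
      have h1 := Finset.le_max' G.1 n hmem
      have h2 : mX G + 1 ≤ n := le_max_right _ _
      rw [mX] at h2
      omega
    refine ⟨aI ⟨insert n G.1, Finset.insert_nonempty _ _⟩, Set.mem_range_self _, ?_, ?_⟩
    · have hsum : aI ⟨insert n G.1, Finset.insert_nonempty _ _⟩ = q n + aI G := by
        rw [aI, aI, aF, aF]
        exact Finset.sum_insert hnG
      rw [hsum]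
      have := q_pos n
      intro hcontra
      nlinarith
    · have hsum : aI ⟨insert n G.1, Finset.insert_nonempty _ _⟩ = q n + aI G := by
        rw [aI, aI, aF, aF]
        exact Finset.sum_insert hnG
      rw [hsum]
      have heq : q n + aI G - aI G = q n := by ring
      rw [heq, abs_of_pos (q_pos n)]
      exact hqn
  · refine ⟨z, hzA, hzx, ?_⟩
    rw [abs_sub_comm, ← Real.dist_eq]
    linarith

lemma not_Gdelta : ¬ IsGδ Ac := by
  intro hGδ
  obtain ⟨T, hTopen, hTct, hTeq⟩ := hGδ
  rcases T.eq_empty_or_nonempty with rfl | hTne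
  · rw [Set.sInter_empty] at hTeq
    exact Cardinal.not_countable_real (hTeq ▸ Ac_countable)
  · obtain ⟨f, rfl⟩ := hTct.exists_eq_range hTne
    have hfopen : ∀ n, IsOpen (f n) := fun n => hTopen _ (Set.mem_range_self n)
    have hAf : Ac = ⋂ n, f n := by rw [hTeq, Set.sInter_range]
    obtain ⟨g, hg⟩ := Ac_countable.exists_eq_range Ac_nonempty
    set K := closure Ac with hKdef
    haveI : Nonempty K := (Ac_nonempty.closure).to_subtype
    haveI : CompleteSpace K := isClosed_closure.completeSpace_coe
    set cov : ℕ ⊕ ℕ → Set K :=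
      Sum.elim (fun n => Subtype.val ⁻¹' (f n)ᶜ) (fun n => Subtype.val ⁻¹' {g n}) with hcov
    have hclosed : ∀ i, IsClosed (cov i) := by
      rintro (n | n)
      · exact (hfopen n).isClosed_compl.preimage continuous_subtype_val
      · exact isClosed_singleton.preimage continuous_subtype_val
    have hcover : ⋃ i, cov i = Set.univ := by
      ext y
      simp only [Set.mem_iUnion, Set.mem_univ, iff_true]
      by_cases hyA : (y : ℝ) ∈ Ac
      · rw [hg] at hyA
        obtain ⟨n, hn⟩ := hyA
        exact ⟨Sum.inr n, by simp [hcov, hn]⟩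
      · have hy2 : (y : ℝ) ∉ ⋂ n, f n := by rw [← hAf]; exact hyA
        rw [Set.mem_iInter] at hy2
        push_neg at hy2
        obtain ⟨n, hn⟩ := hy2
        exact ⟨Sum.inl n, by simp [hcov, hn]⟩
    obtain ⟨i, y, hy⟩ := nonempty_interior_of_iUnion_of_closed hclosed hcover
    obtain ⟨t, hts, htopen, hyt⟩ := mem_interior.mp hy
    obtain ⟨O, hOopen, hOt⟩ := isOpen_induced_iff.mp htopen
    have hyO : (y : ℝ) ∈ O := by
      rw [← hOt] at hyt
      exact hyt
    have hyK : (y : ℝ) ∈ closure Ac := y.2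
    cases i with
    | inl n =>
      obtain ⟨z, hzO, hzA⟩ := mem_closure_iff.mp hyK O hOopen hyO
      have hzK : z ∈ K := subset_closure hzA
      have hzt : (⟨z, hzK⟩ : K) ∈ t := by
        rw [← hOt]
        exact hzO
      have hz : z ∉ f n := by
        have := hts hzt
        simpa [hcov] using this
      apply hz
      rw [hAf] at hzA
      exact Set.mem_iInter.mp hzA n
    | inr n =>
      have hy_eq : (y : ℝ) = g n := by
        have := hts hyt
        simpa [hcov] using this
      obtain ⟨ε, hε, hball⟩ := Metric.isOpen_iff.mp hOopen _ hyO
      obtain ⟨z, hzA, hzne, hzd⟩ := near (y : ℝ) hyK hε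
      have hzO : z ∈ O := hball (by rw [Metric.mem_ball, Real.dist_eq]; exact hzd)
      have hzK : z ∈ K := subset_closure hzA
      have hzt : (⟨z, hzK⟩ : K) ∈ t := by
        rw [← hOt]
        exact hzO
      have hz_eq : z = g n := by
        have := hts hzt
        simpa [hcov] using this
      exact hzne (by rw [hz_eq, ← hy_eq])

end

end CLSProof

/-- There is a countable subset of `ℝ` which is a conical limit set but not a `G_δ` set. -/
theorem exists_countable_conicalLimitSet_not_Gdelta :
    ∃ A : Set ℝ, A.Countable ∧ IsConicalLimitSet A ∧ ¬ IsGδ A :=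
  ⟨CLSProof.Ac, CLSProof.Ac_countable,
    ⟨CLSProof.Ec, CLSProof.Ec_subset, CLSProof.lim_eq⟩, CLSProof.not_Gdelta⟩
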